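/- Let m ≥ 2 and let v : {0,1}^{4m+3} → ℤ⁴ be the general mapping of Theorem 2 built from a Gray bijection g : {0,1}^{2(m−1)} → Q_{m−1}. If b, b' ∈ {0,1}^{4m+3} are such that v(b) and v(b') are at squared Euclidean distance 4 and their cluster labels coincide, i.e. f(b_{k−1},b_{k−2},b_{k−3}) ⊙ ((−1)^{b_{k−4}},(−1)^{b_{k−5}},(−1)^{b_{k−6}},(−1)^{b_{k−7}}) = f(b'_{k−1},b'_{k−2},b'_{k−3}) ⊙ ((−1)^{b'_{k−4}},(−1)^{b'_{k−5}},(−1)^{b'_{k−6}},(−1)^{b'_{k−7}}) (with k = 4m+3), then b and b' agree in the top 7 bits b_{k−7},…,b_{k−1} and differ in exactly one of the remaining 4(m−1) bits. -/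
import Mathlib


/-- The basic map `f` from bit triples to 4-vectors over ℤ, given by the table. -/
def f : Bool → Bool → Bool → (Fin 4 → ℤ)
  | false, false, false => ![1, 3, 1, 3]
  | false, false, true  => ![1, 3, 1, 1]
  | false, true,  true  => ![1, 3, 3, 1]
  | false, true,  false => ![1, 1, 3, 1]
  | true,  true,  false => ![3, 1, 3, 1]
  | true,  true,  true  => ![3, 1, 1, 1]
  | true,  false, true  => ![3, 1, 1, 3]
  | true,  false, false => ![1, 1, 1, 3]

/-- `(-1)^b` for a bit `b`. -/
def neg1 (b : Bool) : ℤ := if b then -1 else 1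

/-- The flip-parity function `ε(t) = (|t − 1|/2) mod 2`. -/
def eps (t : ℤ) : ℕ := (t - 1).natAbs / 2 % 2

/-- The uniform `4^n`-ary QAM constellation. -/
def Q (n : ℕ) : Set (ℤ × ℤ) :=
  {p | Odd p.1 ∧ Odd p.2 ∧ |p.1| ≤ 2 ^ n - 1 ∧ |p.2| ≤ 2 ^ n - 1}

/-- The `(3×4^m)`-ary cross constellation. -/
def X (m : ℕ) : Set (ℤ × ℤ) :=
  {p | Odd p.1 ∧ Odd p.2 ∧ |p.1| ≤ 2 ^ (m + 1) - 1 ∧ |p.2| ≤ 2 ^ (m + 1) - 1 ∧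
    ¬((2 : ℤ) ^ m < |p.1| ∧ (2 : ℤ) ^ m < |p.2|)}

/-- The cluster labels `(t₁,t₂,t₃,t₄) = f(b_{k−1},b_{k−2},b_{k−3}) ⊙
((−1)^{b_{k−4}},(−1)^{b_{k−5}},(−1)^{b_{k−6}},(−1)^{b_{k−7}})`, where `k = 4m+3`. -/
def tvec (m : ℕ) (b : Fin (4 * m + 3) → Bool) : Fin 4 → ℤ := fun i =>
  f (b ⟨4 * m + 2, by omega⟩) (b ⟨4 * m + 1, by omega⟩) (b ⟨4 * m, by omega⟩) i *
    ![neg1 (b ⟨4 * m - 1, by omega⟩), neg1 (b ⟨4 * m - 2, by omega⟩),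
      neg1 (b ⟨4 * m - 3, by omega⟩), neg1 (b ⟨4 * m - 4, by omega⟩)] i

/-- The general mapping `v` of Theorem 2, built from a within-cluster mapping `g`:
`v(b) = (2^{m−1}t₁ + (−1)^{ε(t₁)}u₁, …, 2^{m−1}t₄ + (−1)^{ε(t₄)}u₄)` with
`(u₁,u₂) = g(b_{(k−7)/2},…,b_{k−8})` and `(u₃,u₄) = g(b₀,…,b_{(k−9)/2})`. -/
def vgen (m : ℕ) (g : (Fin (2 * (m - 1)) → Bool) → ℤ × ℤ)
    (b : Fin (4 * m + 3) → Bool) : Fin 4 → ℤ :=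
  let t := tvec m b
  let u12 := g (fun j => b ⟨2 * (m - 1) + j.val, by have := j.isLt; omega⟩)
  let u34 := g (fun j => b ⟨j.val, by have := j.isLt; omega⟩)
  ![2 ^ (m - 1) * t 0 + (-1) ^ eps (t 0) * u12.1,
    2 ^ (m - 1) * t 1 + (-1) ^ eps (t 1) * u12.2,
    2 ^ (m - 1) * t 2 + (-1) ^ eps (t 2) * u34.1,
    2 ^ (m - 1) * t 3 + (-1) ^ eps (t 3) * u34.2]


-- auxiliary lemmas to be inserted before the theorem
set_option synthInstance.maxSize 4000 in
set_option maxHeartbeats 4000000 in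
lemma clust7 : ∀ (a1 a2 a3 a4 a5 a6 a7 c1 c2 c3 c4 c5 c6 c7 : Bool),
    (∀ i : Fin 4, f a1 a2 a3 i * ![neg1 a4, neg1 a5, neg1 a6, neg1 a7] i
      = f c1 c2 c3 i * ![neg1 c4, neg1 c5, neg1 c6, neg1 c7] i) →
    a1 = c1 ∧ a2 = c2 ∧ a3 = c3 ∧ a4 = c4 ∧ a5 = c5 ∧ a6 = c6 ∧ a7 = c7 := by decide

lemma hsq_aux (n : ℕ) (A x y : ℤ) :
    (A + (-1) ^ n * x - (A + (-1) ^ n * y)) ^ 2 = (x - y) ^ 2 := by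
  have h : ((-1 : ℤ) ^ n) ^ 2 = 1 := by
    rcases Nat.even_or_odd n with h | h
    · rw [h.neg_one_pow]; norm_num
    · rw [h.neg_one_pow]; norm_num
  have h2 : A + (-1) ^ n * x - (A + (-1) ^ n * y) = (-1) ^ n * (x - y) := by ring
  rw [h2, mul_pow, h, one_mul]

lemma quad_aux (x1 y1 x2 y2 x3 y3 x4 y4 : ℤ)
    (o1 : Odd x1) (o1' : Odd y1) (o2 : Odd x2) (o2' : Odd y2)
    (o3 : Odd x3) (o3' : Odd y3) (o4 : Odd x4) (o4' : Odd y4)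
    (h : (x1 - y1) ^ 2 + (x2 - y2) ^ 2 + (x3 - y3) ^ 2 + (x4 - y4) ^ 2 = 4) :
    ((x1 - y1) ^ 2 + (x2 - y2) ^ 2 = 4 ∧ x3 = y3 ∧ x4 = y4) ∨
      (x1 = y1 ∧ x2 = y2 ∧ (x3 - y3) ^ 2 + (x4 - y4) ^ 2 = 4) := by
  obtain ⟨k1, hk1⟩ := o1.sub_odd o1'
  obtain ⟨k2, hk2⟩ := o2.sub_odd o2'
  obtain ⟨k3, hk3⟩ := o3.sub_odd o3'
  obtain ⟨k4, hk4⟩ := o4.sub_odd o4'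
  rw [hk1, hk2, hk3, hk4] at h ⊢
  have hS : k1 ^ 2 + k2 ^ 2 + k3 ^ 2 + k4 ^ 2 = 1 := by
    have e1 : (k1 + k1) ^ 2 = 4 * k1 ^ 2 := by ring
    have e2 : (k2 + k2) ^ 2 = 4 * k2 ^ 2 := by ring
    have e3 : (k3 + k3) ^ 2 = 4 * k3 ^ 2 := by ring
    have e4 : (k4 + k4) ^ 2 = 4 * k4 ^ 2 := by ring
    linarith
  have one_le : ∀ k : ℤ, k ≠ 0 → 1 ≤ k ^ 2 := by
    intro k hk
    rcases lt_or_gt_of_ne hk with h' | h' <;> nlinarith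
  by_cases h34 : k3 = 0 ∧ k4 = 0
  · obtain ⟨e3, e4⟩ := h34
    subst e3; subst e4
    left
    refine ⟨by linear_combination 4 * hS, by linarith, by linarith⟩
  · have hge : 1 ≤ k3 ^ 2 + k4 ^ 2 := by
      rcases not_and_or.mp h34 with h' | h'
      · have := one_le _ h'; nlinarith [sq_nonneg k4]
      · have := one_le _ h'; nlinarith [sq_nonneg k3]
    have e1 : k1 = 0 := by
      have h1 : k1 ^ 2 ≤ 0 := by nlinarith [sq_nonneg k2]
      have : k1 ^ 2 = 0 := le_antisymm h1 (sq_nonneg k1)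
      exact pow_eq_zero_iff two_ne_zero |>.mp this
    have e2 : k2 = 0 := by
      have h1 : k2 ^ 2 ≤ 0 := by nlinarith [sq_nonneg k1]
      have : k2 ^ 2 = 0 := le_antisymm h1 (sq_nonneg k2)
      exact pow_eq_zero_iff two_ne_zero |>.mp this
    subst e1; subst e2
    right
    refine ⟨by linarith, by linarith, by linear_combination 4 * hS⟩

/-- if `v(b)` and `v(b')` are at squared Euclidean distance 4 and
their cluster labels coincide, then `b` and `b'` agree in the top 7 bits
`b_{k−7},…,b_{k−1}` and differ in exactly one of the remaining `4(m−1)` bits. -/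
theorem same_cluster_case (m : ℕ) (hm : 2 ≤ m)
    (g : (Fin (2 * (m - 1)) → Bool) → ℤ × ℤ)
    (hginj : Function.Injective g)
    (hgrange : Set.range g = Q (m - 1))
    (hggray : ∀ c c' : Fin (2 * (m - 1)) → Bool,
      ((g c).1 - (g c').1) ^ 2 + ((g c).2 - (g c').2) ^ 2 = 4 →
      (Finset.univ.filter fun j => c j ≠ c' j).card = 1)
    (b b' : Fin (4 * m + 3) → Bool)
    (hdist : (∑ i : Fin 4, (vgen m g b i - vgen m g b' i) ^ 2) = 4)
    (hclust : tvec m b = tvec m b') :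
    (∀ i : Fin (4 * m + 3), 4 * (m - 1) ≤ i.val → b i = b' i) ∧
    (Finset.univ.filter
      fun i : Fin (4 * m + 3) => i.val < 4 * (m - 1) ∧ b i ≠ b' i).card = 1 := by
  -- Part 1: the top 7 bits agree
  obtain ⟨e1, e2, e3, e4, e5, e6, e7⟩ :=
    clust7 _ _ _ _ _ _ _ _ _ _ _ _ _ _ (fun i => congrFun hclust i)
  have part1 : ∀ i : Fin (4 * m + 3), 4 * (m - 1) ≤ i.val → b i = b' i := by
    intro i hi
    have hlt := i.isLt
    have hv : i.val = 4 * m - 4 ∨ i.val = 4 * m - 3 ∨ i.val = 4 * m - 2 ∨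
        i.val = 4 * m - 1 ∨ i.val = 4 * m ∨ i.val = 4 * m + 1 ∨ i.val = 4 * m + 2 := by
      omega
    rcases hv with h | h | h | h | h | h | h
    · rw [show i = (⟨4 * m - 4, by omega⟩ : Fin (4 * m + 3)) from Fin.ext h]; exact e7
    · rw [show i = (⟨4 * m - 3, by omega⟩ : Fin (4 * m + 3)) from Fin.ext h]; exact e6
    · rw [show i = (⟨4 * m - 2, by omega⟩ : Fin (4 * m + 3)) from Fin.ext h]; exact e5
    · rw [show i = (⟨4 * m - 1, by omega⟩ : Fin (4 * m + 3)) from Fin.ext h]; exact e4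
    · rw [show i = (⟨4 * m, by omega⟩ : Fin (4 * m + 3)) from Fin.ext h]; exact e3
    · rw [show i = (⟨4 * m + 1, by omega⟩ : Fin (4 * m + 3)) from Fin.ext h]; exact e2
    · rw [show i = (⟨4 * m + 2, by omega⟩ : Fin (4 * m + 3)) from Fin.ext h]; exact e1
  refine ⟨part1, ?_⟩
  -- Part 2: reduce the distance hypothesis
  have hmem : ∀ x, g x ∈ Q (m - 1) := fun x => hgrange ▸ Set.mem_range_self x
  have hodd : ∀ x, Odd (g x).1 ∧ Odd (g x).2 := by
    intro x
    obtain ⟨h1, h2, -⟩ := hmem x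
    exact ⟨h1, h2⟩
  simp only [vgen, Fin.sum_univ_four, Matrix.cons_val_zero, Matrix.cons_val_one,
    Matrix.head_cons, Matrix.cons_val_two, Matrix.tail_cons, Matrix.cons_val_three] at hdist
  rw [← hclust] at hdist
  rw [hsq_aux, hsq_aux, hsq_aux, hsq_aux] at hdist
  have H := quad_aux _ _ _ _ _ _ _ _ (hodd _).1 (hodd _).1 (hodd _).2 (hodd _).2
    (hodd _).1 (hodd _).1 (hodd _).2 (hodd _).2 hdist
  rcases H with ⟨hd4, hq1, hq2⟩ | ⟨hp1, hp2, hd4⟩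
  · -- case A: the low half (u34) agrees, the high half (u12) differs
    have hge : g (fun j : Fin (2 * (m - 1)) => b ⟨j.val, by have := j.isLt; omega⟩)
        = g (fun j : Fin (2 * (m - 1)) => b' ⟨j.val, by have := j.isLt; omega⟩) :=
      Prod.ext hq1 hq2
    have hd : ∀ i : Fin (4 * m + 3), i.val < 2 * (m - 1) → b i = b' i := by
      intro i hi
      exact congrFun (hginj hge) ⟨i.val, hi⟩
    have hcard := hggray _ _ hd4
    have hJinj : Function.Injective
        (fun j : Fin (2 * (m - 1)) => (⟨2 * (m - 1) + j.val, by have := j.isLt; omega⟩ :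
          Fin (4 * m + 3))) := by
      intro x y hxy
      have := congrArg Fin.val hxy
      simp only at this
      exact Fin.ext (by omega)
    have himg : (Finset.univ.filter
        fun i : Fin (4 * m + 3) => i.val < 4 * (m - 1) ∧ b i ≠ b' i)
        = (Finset.univ.filter fun j : Fin (2 * (m - 1)) =>
            b ⟨2 * (m - 1) + j.val, by have := j.isLt; omega⟩
              ≠ b' ⟨2 * (m - 1) + j.val, by have := j.isLt; omega⟩).image
          (fun j => ⟨2 * (m - 1) + j.val, by have := j.isLt; omega⟩) := by
      ext a
      simp only [Finset.mem_filter, Finset.mem_univ, true_and, Finset.mem_image]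
      constructor
      · rintro ⟨hlt, hne⟩
        have h2 : 2 * (m - 1) ≤ a.val := by
          by_contra hc
          push_neg at hc
          exact hne (hd a hc)
        refine ⟨⟨a.val - 2 * (m - 1), by omega⟩, ?_, Fin.ext (by simp; omega)⟩
        intro hc
        apply hne
        rw [show a = (⟨2 * (m - 1) + (a.val - 2 * (m - 1)), by omega⟩ : Fin (4 * m + 3))
          from Fin.ext (show a.val = 2 * (m - 1) + (a.val - 2 * (m - 1)) by omega)]
        exact hc
      · rintro ⟨j, hj, rfl⟩
        exact ⟨by have := j.isLt; simp; omega, hj⟩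
    rw [himg, Finset.card_image_of_injective _ hJinj]
    exact hcard
  · -- case B: the high half (u12) agrees, the low half (u34) differs
    have hge : g (fun j : Fin (2 * (m - 1)) =>
          b ⟨2 * (m - 1) + j.val, by have := j.isLt; omega⟩)
        = g (fun j : Fin (2 * (m - 1)) =>
          b' ⟨2 * (m - 1) + j.val, by have := j.isLt; omega⟩) :=
      Prod.ext hp1 hp2
    have hc : ∀ i : Fin (4 * m + 3), 2 * (m - 1) ≤ i.val → i.val < 4 * (m - 1) →
        b i = b' i := by
      intro i h1 h2
      have h := congrFun (hginj hge) ⟨i.val - 2 * (m - 1), by omega⟩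
      rwa [show (⟨2 * (m - 1) + (i.val - 2 * (m - 1)), by omega⟩ : Fin (4 * m + 3)) = i
        from Fin.ext (show 2 * (m - 1) + (i.val - 2 * (m - 1)) = i.val by omega)] at h
    have hcard := hggray _ _ hd4
    have hJinj : Function.Injective
        (fun j : Fin (2 * (m - 1)) => (⟨j.val, by have := j.isLt; omega⟩ :
          Fin (4 * m + 3))) := by
      intro x y hxy
      have := congrArg Fin.val hxy
      simp only at this
      exact Fin.ext this
    have himg : (Finset.univ.filter
        fun i : Fin (4 * m + 3) => i.val < 4 * (m - 1) ∧ b i ≠ b' i)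
        = (Finset.univ.filter fun j : Fin (2 * (m - 1)) =>
            b ⟨j.val, by have := j.isLt; omega⟩ ≠ b' ⟨j.val, by have := j.isLt; omega⟩).image
          (fun j => ⟨j.val, by have := j.isLt; omega⟩) := by
      ext a
      simp only [Finset.mem_filter, Finset.mem_univ, true_and, Finset.mem_image]
      constructor
      · rintro ⟨hlt, hne⟩
        have h2 : a.val < 2 * (m - 1) := by
          by_contra hcon
          push_neg at hcon
          exact hne (hc a hcon hlt)
        exact ⟨⟨a.val, h2⟩, hne, Fin.ext rfl⟩
      · rintro ⟨j, hj, rfl⟩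
        exact ⟨by have := j.isLt; simp; omega, hj⟩
    rw [himg, Finset.card_image_of_injective _ hJinj]
    exact hcard
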